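/- Fix integers α_1 > α_2 > ⋯ > α_N ≥ 1 and m_1, …, m_N ≥ 1, and set n := Σ_r α_r m_r. The set 𝕋 of all invertible matrices in ℂ^{n×n} having form (0T0) is a subgroup of GL_n(ℂ): if X and Y have form (0T0), then XY has form (0T0); and if X has form (0T0) and is invertible, then X^{-1} has form (0T0). -/

import Mathlib

open Matrix

noncomputable section

/-- Form (0T0): block matrix partitioned by Jordan structure `(α, m)` whose `(r,s)` block,
viewed as an `α r × α s` array of `m r × m s` blocks, is a rectangular block
upper-triangular Toeplitz matrix aligned to the top-right corner. -/
def IsForm0T0 {N : ℕ} (α m : Fin N → ℕ)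
    (X : Matrix (Σ r : Fin N, Fin (α r) × Fin (m r)) (Σ r : Fin N, Fin (α r) × Fin (m r)) ℂ) :
    Prop :=
  ∃ A : ∀ r s : Fin N, ℕ → Matrix (Fin (m r)) (Fin (m s)) ℂ,
    ∀ (r s : Fin N) (i : Fin (α r)) (j : Fin (α s)) (a : Fin (m r)) (b : Fin (m s)),
      X ⟨r, (i, a)⟩ ⟨s, (j, b)⟩ =
        if (i : ℕ) + (α s - min (α r) (α s)) ≤ (j : ℕ) then
          A r s ((j : ℕ) - (i : ℕ) - (α s - min (α r) (α s))) a b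
        else 0

/-- `E_b(I_m)`: the `bm × bm` block matrix with `I_m` on the block anti-diagonal. -/
def revE (b m : ℕ) : Matrix (Fin b × Fin m) (Fin b × Fin m) ℂ :=
  Matrix.of fun p q => if (p.1 : ℕ) + (q.1 : ℕ) + 1 = b ∧ p.2 = q.2 then 1 else 0

/-- `F = ⊕_r E_{α r}(I_{m r})`. -/
def bigF {N : ℕ} (α m : Fin N → ℕ) :
    Matrix (Σ r : Fin N, Fin (α r) × Fin (m r)) (Σ r : Fin N, Fin (α r) × Fin (m r)) ℂ :=
  Matrix.blockDiagonal' fun r => revE (α r) (m r)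

/-- The `n × n` upper-triangular Jordan block `J_n(λ)`. -/
def Jmat (n : ℕ) (lam : ℂ) : Matrix (Fin n) (Fin n) ℂ :=
  Matrix.of fun i j => if (j : ℕ) = (i : ℕ) then lam else if (j : ℕ) = (i : ℕ) + 1 then 1 else 0

/-- The `n × n` backward identity matrix `E_n`. -/
def ErevC (n : ℕ) : Matrix (Fin n) (Fin n) ℂ :=
  Matrix.of fun i j => if (i : ℕ) + (j : ℕ) + 1 = n then 1 else 0

/-- `P_n = (1/√2)(I + i E_n)`. -/
noncomputable def Pmat (n : ℕ) : Matrix (Fin n) (Fin n) ℂ :=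
  (Real.sqrt 2 : ℂ)⁻¹ • (1 + Complex.I • ErevC n)

/-- `P_n⁻¹ = (1/√2)(I − i E_n)`. -/
noncomputable def PmatInv (n : ℕ) : Matrix (Fin n) (Fin n) ℂ :=
  (Real.sqrt 2 : ℂ)⁻¹ • (1 - Complex.I • ErevC n)

/-- The symmetric canonical form `K_n(λ) = P_n J_n(λ) P_n⁻¹` of a Jordan block. -/
noncomputable def Kmat (n : ℕ) (lam : ℂ) : Matrix (Fin n) (Fin n) ℂ :=
  Pmat n * Jmat n lam * PmatInv n

/-- `T(A_0, …)`: the `β × β` block upper-triangular Toeplitz matrix with blocks `A_j`. -/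
def blkToeplitz (β p q : ℕ) (A : ℕ → Matrix (Fin p) (Fin q) ℂ) :
    Matrix (Fin β × Fin p) (Fin β × Fin q) ℂ :=
  Matrix.of fun x y =>
    if (x.1 : ℕ) ≤ (y.1 : ℕ) then A ((y.1 : ℕ) - (x.1 : ℕ)) x.2 y.2 else 0

/-- The `(i,i)`-th `m r × m r` entry-block of the `(r,r)` diagonal block of `X`; for a
matrix of form (0T0) this is the leading Toeplitz coefficient `A^{rr}_0`. -/
def diagLead {N : ℕ} (α m : Fin N → ℕ)
    (X : Matrix (Σ r : Fin N, Fin (α r) × Fin (m r)) (Σ r : Fin N, Fin (α r) × Fin (m r)) ℂ)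
    (r : Fin N) (i : Fin (α r)) : Matrix (Fin (m r)) (Fin (m r)) ℂ :=
  Matrix.of fun a b => X ⟨r, (i, a)⟩ ⟨r, (i, b)⟩

/-- The space of skew-symmetric matrices commuting with `S`. -/
def skewCommSubmodule (ι : Type*) [Fintype ι] [DecidableEq ι] (S : Matrix ι ι ℂ) :
    Submodule ℂ (Matrix ι ι ℂ) where
  carrier := {X | Xᵀ = -X ∧ X * S = S * X}
  add_mem' := by
    rintro a b ⟨ha1, ha2⟩ ⟨hb1, hb2⟩
    refine ⟨?_, ?_⟩
    · rw [Matrix.transpose_add, ha1, hb1, neg_add]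
    · rw [add_mul, mul_add, ha2, hb2]
  zero_mem' := by
    refine ⟨?_, ?_⟩
    · simp
    · simp
  smul_mem' := by
    rintro c a ⟨h1, h2⟩
    refine ⟨?_, ?_⟩
    · rw [Matrix.transpose_smul, h1, smul_neg]
    · rw [Matrix.smul_mul, Matrix.mul_smul, h2]

/-- The isotropy group (as a set) of `S` under orthogonal similarity. -/
def sigmaSet {ι : Type*} [Fintype ι] [DecidableEq ι] (S : Matrix ι ι ℂ) : Set (Matrix ι ι ℂ) :=
  {Q | Qᵀ * Q = 1 ∧ Qᵀ * S * Q = S}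

section MyAux

lemma sum_window {M : Type*} [AddCommMonoid M] (n a c j : ℕ)
    (hn : ∀ k, k + c ≤ j → k < n) (f : ℕ → M) :
    (∑ k ∈ Finset.range n, if a ≤ k ∧ k + c ≤ j then f (k - a) else 0)
      = ∑ u ∈ Finset.range (j + 1 - c - a), f u := by
  rw [← Finset.sum_filter]
  refine Finset.sum_nbij' (fun k => k - a) (fun u => u + a) ?_ ?_ ?_ ?_ ?_
  · intro k hk
    simp only [Finset.mem_filter, Finset.mem_range] at hk ⊢
    omega
  · intro u hu
    simp only [Finset.mem_filter, Finset.mem_range] at hu ⊢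
    exact ⟨hn _ (by omega), by omega, by omega⟩
  · intro k hk
    simp only [Finset.mem_filter, Finset.mem_range] at hk
    omega
  · intro u _; omega
  · intro k _; rfl

end MyAux


section MyAux2
variable {N : ℕ} (α m : Fin N → ℕ)

lemma mul0T0 (hα1 : ∀ r, 0 < α r)
    (X Y : Matrix (Σ r : Fin N, Fin (α r) × Fin (m r)) (Σ r : Fin N, Fin (α r) × Fin (m r)) ℂ)
    (hX : IsForm0T0 α m X) (hY : IsForm0T0 α m Y) : IsForm0T0 α m (X * Y) := by
  obtain ⟨A, hA⟩ := hX
  obtain ⟨B, hB⟩ := hY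
  refine ⟨fun r s p => ∑ t : Fin N,
      ∑ u ∈ Finset.range (p + (α s - min (α r) (α s)) + 1
        - (α t - min (α r) (α t)) - (α s - min (α t) (α s))),
      A r t u * B t s (p + (α s - min (α r) (α s))
        - (α t - min (α r) (α t)) - (α s - min (α t) (α s)) - u), ?_⟩
  intro r s i j a b
  have step1 : (X * Y) ⟨r, (i, a)⟩ ⟨s, (j, b)⟩
      = ∑ t : Fin N, ∑ k : Fin (α t),
          if (i : ℕ) + (α t - min (α r) (α t)) ≤ (k : ℕ)
              ∧ (k : ℕ) + (α s - min (α t) (α s)) ≤ (j : ℕ) then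
            (A r t ((k : ℕ) - (i : ℕ) - (α t - min (α r) (α t))) *
             B t s ((j : ℕ) - (k : ℕ) - (α s - min (α t) (α s)))) a b
          else 0 := by
    rw [Matrix.mul_apply, ← Finset.univ_sigma_univ, Finset.sum_sigma]
    refine Finset.sum_congr rfl fun t _ => ?_
    rw [Fintype.sum_prod_type]
    refine Finset.sum_congr rfl fun k _ => ?_
    simp only [hA, hB]
    by_cases hP : (i : ℕ) + (α t - min (α r) (α t)) ≤ (k : ℕ)
    · by_cases hQ : (k : ℕ) + (α s - min (α t) (α s)) ≤ (j : ℕ)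
      · simp [hP, hQ, Matrix.mul_apply]
      · simp [hQ]
    · simp [hP]
  rw [step1]
  by_cases hij : (i : ℕ) + (α s - min (α r) (α s)) ≤ (j : ℕ)
  · rw [if_pos hij]
    simp only [Matrix.sum_apply]
    refine Finset.sum_congr rfl fun t _ => ?_
    have hcoe : ∀ g : ℕ → ℂ, (∑ k : Fin (α t), g (k : ℕ)) = ∑ k ∈ Finset.range (α t), g k :=
      fun g => Fin.sum_univ_eq_sum_range g (α t)
    rw [hcoe (fun k => if (i : ℕ) + (α t - min (α r) (α t)) ≤ k
              ∧ k + (α s - min (α t) (α s)) ≤ (j : ℕ) then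
            (A r t (k - (i : ℕ) - (α t - min (α r) (α t))) *
             B t s ((j : ℕ) - k - (α s - min (α t) (α s)))) a b
          else 0)]
    have hstep : (∑ k ∈ Finset.range (α t),
        if (i : ℕ) + (α t - min (α r) (α t)) ≤ k
            ∧ k + (α s - min (α t) (α s)) ≤ (j : ℕ) then
          (A r t (k - (i : ℕ) - (α t - min (α r) (α t))) *
           B t s ((j : ℕ) - k - (α s - min (α t) (α s)))) a b
        else 0)
        = ∑ k ∈ Finset.range (α t),
            (if ((i : ℕ) + (α t - min (α r) (α t))) ≤ k
                ∧ k + (α s - min (α t) (α s)) ≤ (j : ℕ) then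
              (fun u => (A r t u *
                B t s ((j : ℕ) - (α s - min (α t) (α s))
                  - ((i : ℕ) + (α t - min (α r) (α t))) - u)) a b)
                (k - ((i : ℕ) + (α t - min (α r) (α t))))
            else 0) := by
      refine Finset.sum_congr rfl fun k _ => ?_
      by_cases h : ((i : ℕ) + (α t - min (α r) (α t))) ≤ k
          ∧ k + (α s - min (α t) (α s)) ≤ (j : ℕ)
      · rw [if_pos h, if_pos h]
        obtain ⟨h1, h2⟩ := h
        have e1 : k - (i : ℕ) - (α t - min (α r) (α t))
            = k - ((i : ℕ) + (α t - min (α r) (α t))) := by omega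
        have e2 : (j : ℕ) - k - (α s - min (α t) (α s))
            = (j : ℕ) - (α s - min (α t) (α s)) - ((i : ℕ) + (α t - min (α r) (α t)))
              - (k - ((i : ℕ) + (α t - min (α r) (α t)))) := by omega
        rw [e1, e2]
      · rw [if_neg h, if_neg h]
    rw [hstep, sum_window (α t) ((i : ℕ) + (α t - min (α r) (α t)))
        (α s - min (α t) (α s)) (j : ℕ)
        (fun k hk => by have := hα1 t; have := j.isLt; omega)
        (fun u => (A r t u *
                B t s ((j : ℕ) - (α s - min (α t) (α s))
                  - ((i : ℕ) + (α t - min (α r) (α t))) - u)) a b)]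
    have hrange : (j : ℕ) + 1 - (α s - min (α t) (α s)) - ((i : ℕ) + (α t - min (α r) (α t)))
        = (j : ℕ) - (i : ℕ) - (α s - min (α r) (α s)) + (α s - min (α r) (α s)) + 1
          - (α t - min (α r) (α t)) - (α s - min (α t) (α s)) := by omega
    rw [hrange]
    refine Finset.sum_congr rfl fun u _ => ?_
    have e3 : (j : ℕ) - (α s - min (α t) (α s)) - ((i : ℕ) + (α t - min (α r) (α t))) - u
        = (j : ℕ) - (i : ℕ) - (α s - min (α r) (α s)) + (α s - min (α r) (α s))
          - (α t - min (α r) (α t)) - (α s - min (α t) (α s)) - u := by omega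
    rw [e3]
  · rw [if_neg hij]
    refine Finset.sum_eq_zero fun t _ => Finset.sum_eq_zero fun k _ => ?_
    rw [if_neg]
    rintro ⟨h1, h2⟩
    omega

lemma one0T0 : IsForm0T0 α m 1 := by
  refine ⟨fun r s k => Matrix.of fun a b =>
      if r = s ∧ k = 0 ∧ (a : ℕ) = (b : ℕ) then 1 else 0, ?_⟩
  intro r s i j a b
  by_cases hrs : r = s
  · subst hrs
    have hiff : ((⟨r, (i, a)⟩ : Σ r : Fin N, Fin (α r) × Fin (m r)) = ⟨r, (j, b)⟩)
        ↔ i = j ∧ a = b := by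
      constructor
      · intro h
        have h2 := heq_iff_eq.mp (Sigma.mk.inj_iff.mp h).2
        exact ⟨congrArg Prod.fst h2, congrArg Prod.snd h2⟩
      · rintro ⟨rfl, rfl⟩; rfl
    simp only [Matrix.one_apply, min_self, Nat.sub_self, add_zero, Matrix.of_apply,
      eq_self_iff_true, true_and]
    rw [if_congr hiff rfl rfl]
    by_cases h : i = j ∧ a = b
    · obtain ⟨rfl, rfl⟩ := h
      simp
    · rw [if_neg h]
      split_ifs with hle hval
      · exact absurd ⟨Fin.ext (by omega), Fin.ext hval.2⟩ h
      · rfl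
      · rfl
  · rw [Matrix.one_apply_ne (fun h => hrs (congrArg Sigma.fst h))]
    split_ifs with h
    · simp [hrs]
    · rfl

lemma zero0T0 : IsForm0T0 α m 0 :=
  ⟨fun _ _ _ => 0, fun r s i j a b => by split_ifs <;> simp⟩

lemma add0T0 {X Y} (hX : IsForm0T0 α m X) (hY : IsForm0T0 α m Y) :
    IsForm0T0 α m (X + Y) := by
  obtain ⟨A, hA⟩ := hX
  obtain ⟨B, hB⟩ := hY
  refine ⟨fun r s k => A r s k + B r s k, fun r s i j a b => ?_⟩
  simp only [Matrix.add_apply, hA, hB]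
  split_ifs <;> simp
lemma smul0T0 (c : ℂ) {X} (hX : IsForm0T0 α m X) : IsForm0T0 α m (c • X) := by
  obtain ⟨A, hA⟩ := hX
  refine ⟨fun r s k => c • A r s k, fun r s i j a b => ?_⟩
  simp only [Matrix.smul_apply, hA]
  split_ifs <;> simp

end MyAux2


/-- The set `𝕋` of invertible matrices of form (0T0) is a subgroup of
`GL_n(ℂ)`: the identity has form (0T0), products of matrices of form (0T0) have form
(0T0), and the inverse of an invertible matrix of form (0T0) has form (0T0). -/
theorem stmt7 (N : ℕ) (α m : Fin N → ℕ)
    (hαa : StrictAnti α) (hα1 : ∀ r, 0 < α r) (hm : ∀ r, 0 < m r) :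
    IsForm0T0 α m 1 ∧
    (∀ X Y, IsForm0T0 α m X → IsForm0T0 α m Y → IsForm0T0 α m (X * Y)) ∧
    (∀ X, IsForm0T0 α m X → IsUnit X → IsForm0T0 α m X⁻¹) := by
  refine ⟨one0T0 α m, fun X Y hX hY => mul0T0 α m hα1 X Y hX hY, ?_⟩
  intro X hX hU
  set S : Submodule ℂ (Matrix (Σ r : Fin N, Fin (α r) × Fin (m r))
      (Σ r : Fin N, Fin (α r) × Fin (m r)) ℂ) :=
    { carrier := {Z | IsForm0T0 α m Z}
      add_mem' := fun ha hb => add0T0 α m ha hb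
      zero_mem' := zero0T0 α m
      smul_mem' := fun c _ ha => smul0T0 α m c ha } with hS
  let L : S →ₗ[ℂ] S :=
    { toFun := fun y => ⟨X * y.1, mul0T0 α m hα1 X y.1 hX y.2⟩
      map_add' := fun y z => Subtype.ext (Matrix.mul_add X y.1 z.1)
      map_smul' := fun c y => Subtype.ext (Matrix.mul_smul X c y.1) }
  have hinj : Function.Injective L := by
    intro y z h
    exact Subtype.ext (hU.mul_left_cancel (congrArg Subtype.val h))
  obtain ⟨y, hy⟩ := (LinearMap.injective_iff_surjective.mp hinj) ⟨1, one0T0 α m⟩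
  have hXy : X * y.1 = 1 := congrArg Subtype.val hy
  rw [Matrix.inv_eq_right_inv hXy]
  exact y.2
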